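/- arXiv:1205.0641 — 2 statements merged into one kernel-verified Lean document; each statement's English description precedes it below -/
import Mathlib

section
/- Let ρ_1 = diag(1,1,0,0)/2, ρ_2 = diag(0,1,1,0)/2, ρ_3 = diag(0,0,1,1)/2 in M_4 (commuting quantum states), and in M_2 let ψ_0 = [[1,0],[0,0]], ψ_+ = (1/2)[[1,1],[1,1]], ψ_1 = [[0,0],[0,1]]. The linear map T on S = span{ρ_1, ρ_2, ρ_3} determined by T(ρ_1) = ψ_0, T(ρ_2) = ψ_+, T(ρ_3) = ψ_1 is positive on S (it maps every positive semidefinite element of S to a positive semidefinite matrix), but there is no positive linear map T̃ : M_4 → M_2 with T̃(ρ_i) = T(ρ_i) for i = 1, 2, 3. -/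
open scoped Kronecker ComplexOrder Matrix.Norms.L2Operator
open Matrix Filter Classical

/-- `M_d`, the algebra of `d × d` complex matrices. -/
abbrev Mat (d : ℕ) := Matrix (Fin d) (Fin d) ℂ

/-- A linear map `T : S → M_{d'}` on a subspace `S ⊆ M_d` is completely positive if for
every `n` and every positive semidefinite `P = Σ_j X_j ⊗ K_j` with `X_j ∈ S`, `K_j ∈ M_n`,
the matrix `(T ⊗ id_n)(P) = Σ_j T(X_j) ⊗ K_j` is positive semidefinite. -/
def IsCPOn {d d' : ℕ} (S : Submodule ℂ (Mat d)) (T : S →ₗ[ℂ] Mat d') : Prop :=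
  ∀ (n m : ℕ) (X : Fin m → S) (K : Fin m → Matrix (Fin n) (Fin n) ℂ),
    (∑ j, (X j : Mat d) ⊗ₖ K j).PosSemidef →
    (∑ j, (T (X j)) ⊗ₖ K j).PosSemidef

/-- Complete positivity for a linear map defined on all of `M_d`. -/
def IsCP {d d' : ℕ} (T : Mat d →ₗ[ℂ] Mat d') : Prop :=
  ∀ (n m : ℕ) (X : Fin m → Mat d) (K : Fin m → Matrix (Fin n) (Fin n) ℂ),
    (∑ j, X j ⊗ₖ K j).PosSemidef →
    (∑ j, T (X j) ⊗ₖ K j).PosSemidef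

noncomputable def rho161 : Mat 4 := !![1/2, 0, 0, 0; 0, 1/2, 0, 0; 0, 0, 0, 0; 0, 0, 0, 0]
noncomputable def rho162 : Mat 4 := !![0, 0, 0, 0; 0, 1/2, 0, 0; 0, 0, 1/2, 0; 0, 0, 0, 0]
noncomputable def rho163 : Mat 4 := !![0, 0, 0, 0; 0, 0, 0, 0; 0, 0, 1/2, 0; 0, 0, 0, 1/2]
def psi0 : Mat 2 := !![1, 0; 0, 0]
noncomputable def psiPlus : Mat 2 := !![1/2, 1/2; 1/2, 1/2]
def psi1 : Mat 2 := !![0, 0; 0, 1]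

lemma diagNonneg {n : ℕ} {M : Matrix (Fin n) (Fin n) ℂ} (h : M.PosSemidef) (i : Fin n) :
    0 ≤ M i i := h.diag_nonneg

lemma smulPSD {n : ℕ} {M : Matrix (Fin n) (Fin n) ℂ} (h : M.PosSemidef) {z : ℂ}
    (hz : 0 ≤ z) : (z • M).PosSemidef := by
  constructor
  · have hzs : star z = z := by
      rw [Complex.star_def, Complex.conj_eq_iff_im]
      exact ((Complex.le_def.mp hz).2).symm
    unfold Matrix.IsHermitian
    rw [conjTranspose_smul, hzs, h.1]
  · exact (h.smul hz).2

lemma entryZero {n : ℕ} {M : Matrix (Fin n) (Fin n) ℂ} (h : M.PosSemidef) {j : Fin n}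
    (hj : M j j = 0) (i : Fin n) : M i j = 0 := by
  obtain ⟨B, rfl⟩ : ∃ B : Matrix (Fin n) (Fin n) ℂ, M = Bᴴ * B := by
    open scoped MatrixOrder in exact CStarAlgebra.nonneg_iff_eq_star_mul_self.mp h.nonneg
  rw [Matrix.mul_apply] at hj ⊢
  have hB : ∀ k, B k j = 0 := by
    have hnn : ∀ k ∈ Finset.univ, 0 ≤ (Bᴴ j k * B k j) := fun k _ => by
      rw [conjTranspose_apply]; exact star_mul_self_nonneg _
    have h0 := (Finset.sum_eq_zero_iff_of_nonneg hnn).mp hj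
    intro k
    have hk := h0 k (Finset.mem_univ k)
    rw [conjTranspose_apply] at hk
    have : Complex.normSq (B k j) = 0 := by
      simpa [Complex.star_def, ← Complex.normSq_eq_conj_mul_self] using congrArg Complex.re hk
    exact Complex.normSq_eq_zero.mp this
  exact Finset.sum_eq_zero fun k _ => by rw [hB k, mul_zero]

lemma psi0PSD : psi0.PosSemidef := by
  have : psi0 = (!![1, 0; 0, 0] : Mat 2)ᴴ * !![1, 0; 0, 0] := by
    ext i j; fin_cases i <;> fin_cases j <;> simp [psi0, Matrix.mul_apply, Fin.sum_univ_two]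
  rw [this]; exact posSemidef_conjTranspose_mul_self _

lemma psi1PSD : psi1.PosSemidef := by
  have : psi1 = (!![0, 0; 0, 1] : Mat 2)ᴴ * !![0, 0; 0, 1] := by
    ext i j; fin_cases i <;> fin_cases j <;> simp [psi1, Matrix.mul_apply, Fin.sum_univ_two]
  rw [this]; exact posSemidef_conjTranspose_mul_self _

lemma half_nonneg : (0:ℂ) ≤ 2⁻¹ := by
  rw [Complex.le_def]; norm_num

lemma psiPlusPSD : psiPlus.PosSemidef := by
  have : psiPlus = (2⁻¹ : ℂ) • ((!![1, 1; 0, 0] : Mat 2)ᴴ * !![1, 1; 0, 0]) := by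
    ext i j; fin_cases i <;> fin_cases j <;>
      simp [psiPlus, Matrix.mul_apply, Fin.sum_univ_two] <;> norm_num
  rw [this]; exact smulPSD (posSemidef_conjTranspose_mul_self _) half_nonneg

lemma psiMinusPSD : ((2⁻¹ : ℂ) • ((!![1, -1; 0, 0] : Mat 2)ᴴ * !![1, -1; 0, 0])).PosSemidef :=
  smulPSD (posSemidef_conjTranspose_mul_self _) half_nonneg


/-- The map `ρ_1 ↦ ψ_0`, `ρ_2 ↦ ψ_+`, `ρ_3 ↦ ψ_1` is positive on `span{ρ_1, ρ_2, ρ_3}`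
but has no positive linear extension `M_4 → M_2`. -/
theorem stmt16 :
    (∀ a b c : ℂ, (a • rho161 + b • rho162 + c • rho163).PosSemidef →
        (a • psi0 + b • psiPlus + c • psi1).PosSemidef) ∧
    ¬ ∃ T : Mat 4 →ₗ[ℂ] Mat 2,
        (∀ A : Mat 4, A.PosSemidef → (T A).PosSemidef) ∧
        T rho161 = psi0 ∧ T rho162 = psiPlus ∧ T rho163 = psi1 := by
  constructor
  · intro a b c h
    have h0 := diagNonneg h 0
    have h1 := diagNonneg h 1
    have h2 := diagNonneg h 2
    have h3 := diagNonneg h 3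
    simp [rho161, rho162, rho163, Matrix.vecHead, Matrix.vecTail] at h0 h1 h2 h3
    have two_nn : (0:ℂ) ≤ 2 := by rw [Complex.le_def]; norm_num
    have ha : 0 ≤ a := by
      have := mul_nonneg two_nn h0
      rwa [show (2:ℂ) * (a * 2⁻¹) = a by ring] at this
    have hab : 0 ≤ a + b := by
      have := mul_nonneg two_nn h1
      rwa [show (2:ℂ) * (a * 2⁻¹ + b * 2⁻¹) = a + b by ring] at this
    have hbc : 0 ≤ b + c := by
      have := mul_nonneg two_nn h2
      rwa [show (2:ℂ) * (b * 2⁻¹ + c * 2⁻¹) = b + c by ring] at this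
    have hc : 0 ≤ c := by
      have := mul_nonneg two_nn h3
      rwa [show (2:ℂ) * (c * 2⁻¹) = c by ring] at this
    have hbim : b.im = 0 := by
      have e1 := (Complex.le_def.mp ha).2
      have e2 := (Complex.le_def.mp hab).2
      simp [Complex.add_im] at e1 e2
      linarith
    by_cases hbre : 0 ≤ b.re
    · have hb : 0 ≤ b := Complex.le_def.mpr (by constructor <;> simp [hbim, hbre])
      exact ((smulPSD psi0PSD ha).add (smulPSD psiPlusPSD hb)).add (smulPSD psi1PSD hc)
    · have hnb : 0 ≤ -b := Complex.le_def.mpr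
        (by constructor <;> simp [hbim] ; linarith [le_of_not_ge hbre])
      have key : a • psi0 + b • psiPlus + c • psi1
          = ((a + b) • psi0 + (-b) • ((2⁻¹ : ℂ) • ((!![1, -1; 0, 0] : Mat 2)ᴴ * !![1, -1; 0, 0]))) + (b + c) • psi1 := by
        ext i j
        fin_cases i <;> fin_cases j <;>
          simp [psi0, psiPlus, psi1, Matrix.mul_apply, Fin.sum_univ_two] <;> ring
      rw [key]
      exact ((smulPSD psi0PSD hab).add (smulPSD psiMinusPSD hnb)).add (smulPSD psi1PSD hbc)
  · rintro ⟨T, hpos, h1, h2, h3⟩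
    set P1 : Mat 4 := Matrix.diagonal (fun j => if j = 0 then 1 else 0) with hP1
    set P2 : Mat 4 := Matrix.diagonal (fun j => if j = 1 then 1 else 0) with hP2
    set P3 : Mat 4 := Matrix.diagonal (fun j => if j = 2 then 1 else 0) with hP3
    set P4 : Mat 4 := Matrix.diagonal (fun j => if j = 3 then 1 else 0) with hP4
    have psd : ∀ i : Fin 4, (Matrix.diagonal (fun j : Fin 4 => if j = i then (1:ℂ) else 0)).PosSemidef := by
      intro i
      refine Matrix.PosSemidef.diagonal ?_
      intro j
      dsimp
      split
      · rw [Complex.le_def]; norm_num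
      · exact le_refl 0
    have e1 : P1 + P2 = (2:ℂ) • rho161 := by
      ext i j; fin_cases i <;> fin_cases j <;>
        simp [hP1, hP2, rho161, Matrix.diagonal, Matrix.vecHead, Matrix.vecTail] <;> norm_num
    have e2 : P2 + P3 = (2:ℂ) • rho162 := by
      ext i j; fin_cases i <;> fin_cases j <;>
        simp [hP2, hP3, rho162, Matrix.diagonal, Matrix.vecHead, Matrix.vecTail] <;> norm_num
    have e3 : P3 + P4 = (2:ℂ) • rho163 := by
      ext i j; fin_cases i <;> fin_cases j <;>
        simp [hP3, hP4, rho163, Matrix.diagonal, Matrix.vecHead, Matrix.vecTail] <;> norm_num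
    have tA : T P1 + T P2 = (2:ℂ) • psi0 := by
      rw [← map_add, e1, _root_.map_smul, h1]
    have tB : T P2 + T P3 = (2:ℂ) • psiPlus := by
      rw [← map_add, e2, _root_.map_smul, h2]
    have tC : T P3 + T P4 = (2:ℂ) • psi1 := by
      rw [← map_add, e3, _root_.map_smul, h3]
    have hA2 : (T P2).PosSemidef := hpos _ (psd 1)
    have hA3 : (T P3).PosSemidef := hpos _ (psd 2)
    -- (T P2) 1 1 = 0
    have s1 : T P1 1 1 + T P2 1 1 = 0 := by
      have := congrFun (congrFun tA 1) 1
      simpa [psi0] using this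
    have z2 : T P2 1 1 = 0 := by
      have hn1 := diagNonneg (hpos _ (psd 0)) 1
      have hn2 := diagNonneg hA2 1
      have : T P2 1 1 ≤ 0 := by
        rw [show T P2 1 1 = -(T P1 1 1) by linear_combination s1]
        exact neg_nonpos_of_nonneg hn1
      exact le_antisymm this hn2
    have s2 : T P3 0 0 + T P4 0 0 = 0 := by
      have := congrFun (congrFun tC 0) 0
      simpa [psi1] using this
    have z3 : T P3 0 0 = 0 := by
      have hn4 := diagNonneg (hpos _ (psd 3)) 0
      have hn3 := diagNonneg hA3 0
      have : T P3 0 0 ≤ 0 := by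
        rw [show T P3 0 0 = -(T P4 0 0) by linear_combination s2]
        exact neg_nonpos_of_nonneg hn4
      exact le_antisymm this hn3
    have o2 : T P2 0 1 = 0 := entryZero hA2 z2 0
    have o2' : T P2 1 0 = 0 := by
      rw [← hA2.1.apply 1 0, o2, star_zero]
    have o3 : T P3 1 0 = 0 := entryZero hA3 z3 1
    have : T P2 1 0 + T P3 1 0 = 1 := by
      have := congrFun (congrFun tB 1) 0
      simpa [psiPlus] using this
    rw [o2', o3] at this
    norm_num at this
end

section
/- Let σ_x = [[0,1],[1,0]], σ_y = [[0,−i],[i,0]], σ_z = [[1,0],[0,−1]] be the Pauli matrices and I the identity in M_2. For c ∈ ℝ, the linear map T : M_2 → M_2 determined by T(I) = c·I, T(σ_x) = σ_y, T(σ_y) = σ_x, T(σ_z) = σ_z is completely positive if and only if c ≥ 3. In particular, there is no unital (T̃(I) = I) completely positive linear map T̃ : M_2 → M_2 with T̃(σ_x) = σ_y, T̃(σ_y) = σ_x and T̃(σ_z) = σ_z. -/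
open scoped Kronecker ComplexOrder Matrix.Norms.L2Operator
open Matrix Filter Classical

def matPsi0 : Mat 2 := !![1, 0; 0, 0]
def pauliX : Mat 2 := !![0, 1; 1, 0]
def pauliY : Mat 2 := !![0, -Complex.I; Complex.I, 0]
def pauliZ : Mat 2 := !![1, 0; 0, -1]

lemma kron_conjT {a b n : ℕ} (A : Matrix (Fin a) (Fin b) ℂ) (B : Matrix (Fin n) (Fin n) ℂ) :
    (A ⊗ₖ B)ᴴ = Aᴴ ⊗ₖ Bᴴ := by
  ext ⟨i, k⟩ ⟨j, l⟩
  simp [conjTranspose_apply, kroneckerMap_apply, mul_comm]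

lemma sum_kron {a n m : ℕ} (A : Fin m → Mat a) (B : Matrix (Fin n) (Fin n) ℂ) :
    (∑ j, A j) ⊗ₖ B = ∑ j, A j ⊗ₖ B := by
  ext ⟨i, k⟩ ⟨j, l⟩
  simp only [kroneckerMap_apply, Matrix.sum_apply, Finset.sum_mul]

lemma mat2_decomp (M : Mat 2) :
    M = ((M 0 0 + M 1 1)/2) • (1 : Mat 2) + ((M 0 1 + M 1 0)/2) • pauliX
      + (Complex.I * (M 0 1 - M 1 0)/2) • pauliY + ((M 0 0 - M 1 1)/2) • pauliZ := by
  ext i j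
  fin_cases i <;> fin_cases j <;>
    simp [pauliX, pauliY, pauliZ, Matrix.one_apply] <;> ring_nf <;>
    simp [Complex.I_sq, Complex.I_mul_I] <;> ring

lemma scaled_kraus (r : ℝ) (B M : Mat 2) :
    ((r:ℂ) • B) * M * (((r:ℂ) • B)ᴴ) = ((r*r : ℝ) : ℂ) • (B * M * Bᴴ) := by
  have h : star ((r:ℂ)) = (r:ℂ) := by simp [Complex.star_def, Complex.conj_ofReal]
  rw [conjTranspose_smul, h, Matrix.smul_mul, Matrix.smul_mul, Matrix.mul_smul, smul_smul]
  norm_cast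

lemma kraus_id (c : ℝ) (M : Mat 2) :
    (((c:ℂ)+1)/2) • (!![1,0;0,0] * M * (!![1,0;0,0] : Mat 2)ᴴ)
    + (((c:ℂ)+1)/2) • (!![0,0;0,1] * M * (!![0,0;0,1] : Mat 2)ᴴ)
    + (((c:ℂ)+1)/4) • (!![0,-Complex.I;1,0] * M * (!![0,-Complex.I;1,0] : Mat 2)ᴴ)
    + (((c:ℂ)-3)/4) • (!![0,Complex.I;1,0] * M * (!![0,Complex.I;1,0] : Mat 2)ᴴ)
    = ((M 0 0 + M 1 1)/2) • ((c:ℂ) • (1 : Mat 2)) + ((M 0 1 + M 1 0)/2) • pauliY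
      + (Complex.I * (M 0 1 - M 1 0)/2) • pauliX + ((M 0 0 - M 1 1)/2) • pauliZ := by
  ext i j
  fin_cases i <;> fin_cases j <;>
    simp [pauliX, pauliY, pauliZ, Matrix.mul_apply, Fin.sum_univ_succ, Matrix.one_apply,
      conjTranspose_apply, Matrix.vecMul, dotProduct, Matrix.mulVec] <;>
    ring_nf <;> simp [Complex.I_sq] <;> ring_nf

lemma main19 : ∀ (c : ℝ) (T : Mat 2 →ₗ[ℂ] Mat 2),
      T 1 = (c : ℂ) • (1 : Mat 2) → T pauliX = pauliY → T pauliY = pauliX →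
      T pauliZ = pauliZ → (IsCP T ↔ 3 ≤ c) := by
  intro c T h1 hx hy hz
  have Tval : ∀ M : Mat 2, T M = ((M 0 0 + M 1 1)/2) • ((c:ℂ) • (1 : Mat 2))
      + ((M 0 1 + M 1 0)/2) • pauliY + (Complex.I * (M 0 1 - M 1 0)/2) • pauliX
      + ((M 0 0 - M 1 1)/2) • pauliZ := by
    intro M
    conv_lhs => rw [mat2_decomp M]
    rw [map_add, map_add, map_add, _root_.map_smul, _root_.map_smul, _root_.map_smul, _root_.map_smul, h1, hx, hy, hz]
  constructor
  · -- IsCP → 3 ≤ c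
    intro hCP
    set E : Fin 4 → Mat 2 := ![!![1,0;0,0], !![0,1;0,0], !![0,0;1,0], !![0,0;0,1]] with hE
    have hP : (∑ j, E j ⊗ₖ E j).PosSemidef := by
      have hrepr : (∑ j, E j ⊗ₖ E j)
          = (Matrix.of (fun (_ : Fin 1) (p : Fin 2 × Fin 2) => if p.1 = p.2 then (1:ℂ) else 0))ᴴ
            * (Matrix.of (fun (_ : Fin 1) (p : Fin 2 × Fin 2) => if p.1 = p.2 then (1:ℂ) else 0)) := by
        ext ⟨i, k⟩ ⟨j, l⟩
        fin_cases i <;> fin_cases k <;> fin_cases j <;> fin_cases l <;>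
          simp [hE, Fin.sum_univ_four, Matrix.mul_apply, kroneckerMap_apply,
            conjTranspose_apply, Fin.sum_univ_succ]
      rw [hrepr]
      exact posSemidef_conjTranspose_mul_self _
    have hC := hCP 2 4 E E hP
    set w : Fin 2 × Fin 2 → ℂ :=
      fun p => if p = (0,1) then 1 else if p = (1,0) then -Complex.I else 0 with hw
    have hq := hC.dotProduct_mulVec_nonneg w
    have hval : star w ⬝ᵥ ((∑ j, T (E j) ⊗ₖ E j) *ᵥ w) = ((c - 3 : ℝ) : ℂ) := by
      have e0 : T (E 0) = !![((c:ℂ)+1)/2, 0; 0, ((c:ℂ)-1)/2] := by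
        rw [Tval]; ext i j; fin_cases i <;> fin_cases j <;>
          simp [hE, pauliX, pauliY, pauliZ, Matrix.one_apply] <;> ring
      have e1 : T (E 1) = !![0, 0; Complex.I, 0] := by
        rw [Tval]; ext i j; fin_cases i <;> fin_cases j <;>
          simp [hE, pauliX, pauliY, pauliZ, Matrix.one_apply] <;> ring
      have e2 : T (E 2) = !![0, -Complex.I; 0, 0] := by
        rw [Tval]; ext i j; fin_cases i <;> fin_cases j <;>
          simp [hE, pauliX, pauliY, pauliZ, Matrix.one_apply] <;> ring
      have e3 : T (E 3) = !![((c:ℂ)-1)/2, 0; 0, ((c:ℂ)+1)/2] := by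
        rw [Tval]; ext i j; fin_cases i <;> fin_cases j <;>
          simp [hE, pauliX, pauliY, pauliZ, Matrix.one_apply] <;> ring
      rw [Fin.sum_univ_four, e0, e1, e2, e3]
      simp [hw, hE, dotProduct, Matrix.mulVec, Fintype.sum_prod_type,
        Fin.sum_univ_succ, kroneckerMap_apply, Matrix.add_apply, Prod.ext_iff]
      push_cast
      ring_nf
      simp [Complex.I_sq]
      ring_nf
    rw [hval] at hq
    have := Complex.zero_le_real.mp hq
    linarith
  · -- 3 ≤ c → IsCP
    intro hc n m X K hP
    set a : ℝ := Real.sqrt ((c+1)/2) with hadef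
    set b : ℝ := Real.sqrt ((c+1)/4) with hbdef
    set d : ℝ := Real.sqrt ((c-3)/4) with hddef
    have ha : ((a*a : ℝ) : ℂ) = ((c:ℂ)+1)/2 := by
      rw [hadef, Real.mul_self_sqrt (by linarith)]; push_cast; ring
    have hb : ((b*b : ℝ) : ℂ) = ((c:ℂ)+1)/4 := by
      rw [hbdef, Real.mul_self_sqrt (by linarith)]; push_cast; ring
    have hd : ((d*d : ℝ) : ℂ) = ((c:ℂ)-3)/4 := by
      rw [hddef, Real.mul_self_sqrt (by linarith)]; push_cast; ring
    set A : Fin 4 → Mat 2 :=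
      ![(a:ℂ) • !![1,0;0,0], (a:ℂ) • !![0,0;0,1],
        (b:ℂ) • !![0,-Complex.I;1,0], (d:ℂ) • !![0,Complex.I;1,0]] with hA
    have key : ∀ M : Mat 2, T M = ∑ m', A m' * M * (A m')ᴴ := by
      intro M
      rw [Tval, Fin.sum_univ_four]
      have a0 : A 0 = (a:ℂ) • !![1,0;0,0] := rfl
      have a1 : A 1 = (a:ℂ) • !![0,0;0,1] := rfl
      have a2 : A 2 = (b:ℂ) • !![0,-Complex.I;1,0] := rfl
      have a3 : A 3 = (d:ℂ) • !![0,Complex.I;1,0] := rfl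
      rw [a0, a1, a2, a3, scaled_kraus, scaled_kraus, scaled_kraus, scaled_kraus,
        ha, hb, hd]
      exact (kraus_id c M).symm
    have step : (∑ j, T (X j) ⊗ₖ K j)
        = ∑ m' : Fin 4, (A m' ⊗ₖ (1 : Matrix (Fin n) (Fin n) ℂ)) * (∑ j, X j ⊗ₖ K j)
            * (A m' ⊗ₖ (1 : Matrix (Fin n) (Fin n) ℂ))ᴴ := by
      have hterm : ∀ (m' : Fin 4) (j : Fin m),
          (A m' ⊗ₖ (1 : Matrix (Fin n) (Fin n) ℂ)) * (X j ⊗ₖ K j)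
            * (A m' ⊗ₖ (1 : Matrix (Fin n) (Fin n) ℂ))ᴴ
          = (A m' * X j * (A m')ᴴ) ⊗ₖ K j := by
        intro m' j
        rw [kron_conjT, conjTranspose_one, ← mul_kronecker_mul, ← mul_kronecker_mul,
          one_mul, mul_one]
      calc ∑ j, T (X j) ⊗ₖ K j
          = ∑ j, ∑ m' : Fin 4, (A m' * X j * (A m')ᴴ) ⊗ₖ K j := by
            simp_rw [key, sum_kron]
        _ = ∑ m' : Fin 4, ∑ j, (A m' * X j * (A m')ᴴ) ⊗ₖ K j := Finset.sum_comm
        _ = _ := by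
            simp_rw [← hterm, ← Finset.sum_mul, ← Finset.mul_sum]
    rw [step]
    exact Finset.sum_induction _ _ (fun x y hx hy => hx.add hy)
      Matrix.PosSemidef.zero (fun i _ => hP.mul_mul_conjTranspose_same _)

/-- The linear map on `M_2` determined by `I ↦ cI`, `σ_x ↦ σ_y`, `σ_y ↦ σ_x`, `σ_z ↦ σ_z`
is completely positive iff `c ≥ 3`; in particular no unital completely positive map swaps
`σ_x` and `σ_y` while fixing `σ_z`. -/
theorem stmt19 :
    (∀ (c : ℝ) (T : Mat 2 →ₗ[ℂ] Mat 2),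
      T 1 = (c : ℂ) • (1 : Mat 2) → T pauliX = pauliY → T pauliY = pauliX →
      T pauliZ = pauliZ → (IsCP T ↔ 3 ≤ c)) ∧
    ¬ ∃ T : Mat 2 →ₗ[ℂ] Mat 2, IsCP T ∧ T 1 = (1 : Mat 2) ∧
        T pauliX = pauliY ∧ T pauliY = pauliX ∧ T pauliZ = pauliZ := by
  refine ⟨main19, ?_⟩
  rintro ⟨T, hCP, h1, hx, hy, hz⟩
  have h := (main19 1 T (by rw [h1, Complex.ofReal_one, one_smul]) hx hy hz).mp hCP
  linarith
end
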